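/- For all real p > 0, (d/dp) ln r(p) = ∫_0^1 t^p/(1+t)^2 dt / p, where r(p) = Γ((p+1)/2)/(sqrt(p/2)·Γ(p/2)). Equivalently, (1/2)[ψ((p+1)/2) − ψ(p/2)] − 1/(2p) = (1/p)∫_0^1 t^p/(1+t)^2 dt. -/

import Mathlib

open Real Set intervalIntegral MeasureTheory Filter

noncomputable def r (p : ℝ) : ℝ :=
  Real.Gamma ((p + 1) / 2) / (Real.sqrt (p / 2) * Real.Gamma (p / 2))

noncomputable def psi (x : ℝ) : ℝ := deriv Real.Gamma x / Real.Gamma x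

section aux

lemma diffGamma {x : ℝ} (hx : 0 < x) : DifferentiableAt ℝ Real.Gamma x :=
  Real.differentiableAt_Gamma (fun m => by
    intro h; rw [h] at hx; have : (0:ℝ) ≤ m := Nat.cast_nonneg m; linarith)

lemma hasDerivAt_logGamma {x : ℝ} (hx : 0 < x) :
    HasDerivAt (fun y => Real.log (Real.Gamma y)) (psi x) x :=
  (diffGamma hx).hasDerivAt.log (Real.Gamma_pos_of_pos hx).ne'

lemma deriv_logGamma {x : ℝ} (hx : 0 < x) :
    deriv (fun y => Real.log (Real.Gamma y)) x = psi x :=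
  (hasDerivAt_logGamma hx).deriv

lemma psi_monotone : MonotoneOn psi (Ioi (0:ℝ)) := by
  have h := Real.convexOn_log_Gamma.monotoneOn_deriv
    (fun x hx => ((diffGamma hx).log (Real.Gamma_pos_of_pos hx).ne'))
  intro x hx y hy hxy
  have hx' := deriv_logGamma hx
  have hy' := deriv_logGamma hy
  simp only [Function.comp_def] at h
  rw [← hx', ← hy']
  exact h hx hy hxy

lemma psi_add_one {x : ℝ} (hx : 0 < x) : psi (x + 1) = psi x + 1 / x := by
  have h1 : HasDerivAt (fun y => Real.log (Real.Gamma (y + 1))) (psi (x+1)) x := by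
    simpa [Function.comp_def] using (hasDerivAt_logGamma (by linarith : (0:ℝ) < x + 1)).comp x
      ((hasDerivAt_id x).add_const 1)
  have h2 : HasDerivAt (fun y => Real.log (Real.Gamma y) + Real.log y) (psi x + 1/x) x :=
    (hasDerivAt_logGamma hx).add ((Real.hasDerivAt_log hx.ne').congr_deriv (one_div x).symm)
  have hev : (fun y => Real.log (Real.Gamma (y + 1))) =ᶠ[nhds x]
      (fun y => Real.log (Real.Gamma y) + Real.log y) := by
    filter_upwards [eventually_gt_nhds hx] with y hy
    rw [Real.Gamma_add_one hy.ne', Real.log_mul hy.ne' (Real.Gamma_pos_of_pos hy).ne', add_comm]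
  exact (h1.congr_of_eventuallyEq hev.symm).unique h2

noncomputable def II (p : ℝ) : ℝ := ∫ t in (0:ℝ)..1, t ^ (p-1) / (1 + t)

noncomputable def gg (p : ℝ) : ℝ := (psi ((p+1)/2) - psi (p/2)) / 2

lemma II_integrable {p : ℝ} (hp : 0 < p) :
    IntervalIntegrable (fun t : ℝ => t ^ (p-1) / (1 + t)) volume 0 1 := by
  have h1 : IntervalIntegrable (fun t : ℝ => t ^ (p-1)) volume 0 1 :=
    intervalIntegral.intervalIntegrable_rpow' (by linarith)
  have h2 : ContinuousOn (fun t : ℝ => (1 + t)⁻¹) (uIcc (0:ℝ) 1) := by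
    apply ContinuousOn.inv₀ (by fun_prop)
    intro x hx
    rw [uIcc_of_le (by norm_num)] at hx
    have := hx.1; positivity
  simpa [div_eq_mul_inv] using h1.mul_continuousOn h2

lemma II_nonneg {p : ℝ} (hp : 0 < p) : 0 ≤ II p := by
  apply intervalIntegral.integral_nonneg (by norm_num)
  intro u hu
  have h1 : (0:ℝ) ≤ u ^ (p-1) := rpow_nonneg hu.1 _
  have h2 : (0:ℝ) < 1 + u := by linarith [hu.1]
  positivity

lemma integral_rpow_01 {q : ℝ} (hq : -1 < q) : ∫ t in (0:ℝ)..1, t ^ q = 1/(q+1) := by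
  rw [integral_rpow (Or.inl hq)]
  rw [Real.zero_rpow (by linarith), Real.one_rpow]
  norm_num

lemma II_le {p : ℝ} (hp : 0 < p) : II p ≤ 1 / p := by
  have : II p ≤ ∫ t in (0:ℝ)..1, t ^ (p-1) := by
    apply intervalIntegral.integral_mono_on (by norm_num) (II_integrable hp)
      (intervalIntegral.intervalIntegrable_rpow' (by linarith))
    intro u hu
    have h1 : (0:ℝ) ≤ u ^ (p-1) := rpow_nonneg hu.1 _
    have h2 : (1:ℝ) ≤ 1 + u := by linarith [hu.1]
    calc u ^ (p-1) / (1+u) ≤ u ^ (p-1) / 1 :=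
          div_le_div_of_nonneg_left h1 one_pos h2
      _ = u ^ (p-1) := by ring
  rw [integral_rpow_01 (by linarith)] at this
  simpa using this

lemma II_rec {p : ℝ} (hp : 0 < p) : II (p+2) = II p + (1/(p+1) - 1/p) := by
  have key : ∀ t ∈ uIcc (0:ℝ) 1,
      t ^ (p+2-1) / (1+t) = t ^ (p-1) / (1+t) + (t ^ p - t ^ (p-1)) := by
    intro t ht
    rw [uIcc_of_le (by norm_num)] at ht
    rcases eq_or_lt_of_le ht.1 with h0 | h0
    · subst h0
      rw [Real.zero_rpow (by linarith), Real.zero_rpow hp.ne']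
      ring_nf
    · have h1 : (0:ℝ) < 1 + t := by linarith
      have e1 : t ^ (p+2-1) = t ^ (p-1) * t^2 := by
        rw [← Real.rpow_natCast t 2, ← Real.rpow_add h0]
        push_cast
        ring_nf
      have e2 : t ^ p = t ^ (p-1) * t := by
        rw [← Real.rpow_add_one h0.ne' (p-1)]
        ring_nf
      rw [e1, e2]
      field_simp
      ring
  have : II (p+2) = ∫ t in (0:ℝ)..1, (t ^ (p-1) / (1+t) + (t ^ p - t ^ (p-1))) := by
    unfold II
    exact intervalIntegral.integral_congr key
  rw [this, intervalIntegral.integral_add (II_integrable hp)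
    ((intervalIntegral.intervalIntegrable_rpow' (by linarith : (-1:ℝ) < p)).sub
      (intervalIntegral.intervalIntegrable_rpow' (by linarith : (-1:ℝ) < p-1))),
    intervalIntegral.integral_sub (intervalIntegral.intervalIntegrable_rpow' (by linarith))
      (intervalIntegral.intervalIntegrable_rpow' (by linarith)),
    integral_rpow_01 (by linarith), integral_rpow_01 (by linarith)]
  unfold II; ring_nf

lemma gg_nonneg {p : ℝ} (hp : 0 < p) : 0 ≤ gg p := by
  have := psi_monotone (mem_Ioi.mpr (by linarith : (0:ℝ) < p/2))
    (mem_Ioi.mpr (by linarith : (0:ℝ) < (p+1)/2)) (by linarith)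
  unfold gg; linarith

lemma gg_le {p : ℝ} (hp : 0 < p) : gg p ≤ 1 / p := by
  have h1 := psi_monotone (mem_Ioi.mpr (by linarith : (0:ℝ) < (p+1)/2))
    (mem_Ioi.mpr (by linarith : (0:ℝ) < p/2 + 1)) (by linarith)
  have h2 := psi_add_one (by linarith : (0:ℝ) < p/2)
  rw [h2] at h1
  have : 1 / (p/2) = 2 / p := by rw [div_div_eq_mul_div]; ring_nf
  rw [this] at h1
  unfold gg
  rw [div_le_div_iff₀ (by norm_num) hp]
  have : 2 / p * p = 2 := div_mul_cancel₀ 2 hp.ne'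
  nlinarith [h1]

lemma gg_rec {p : ℝ} (hp : 0 < p) : gg (p+2) = gg p + (1/(p+1) - 1/p) := by
  have e1 : (p+2+1)/2 = (p+1)/2 + 1 := by ring
  have e2 : (p+2)/2 = p/2 + 1 := by ring
  have h1 := psi_add_one (by linarith : (0:ℝ) < (p+1)/2)
  have h2 := psi_add_one (by linarith : (0:ℝ) < p/2)
  have d1 : 1 / ((p+1)/2) = 2/(p+1) := by rw [one_div, div_eq_mul_inv]; field_simp
  have d2 : 1 / (p/2) = 2/p := by rw [one_div, div_eq_mul_inv]; field_simp
  unfold gg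
  rw [e1, e2, h1, h2, d1, d2]
  field_simp
  ring

lemma gg_eq_II {p : ℝ} (hp : 0 < p) : gg p = II p := by
  have key : ∀ n : ℕ, gg p - II p = gg (p + 2*n) - II (p + 2*n) := by
    intro n
    induction n with
    | zero => simp
    | succ n ih =>
      have hpn : 0 < p + 2*n := by positivity
      have e : p + 2*(n+1 : ℕ) = (p + 2*n) + 2 := by push_cast; ring
      rw [e, gg_rec hpn, II_rec hpn]
      push_cast at ih ⊢
      linarith
  have hb : ∀ n : ℕ, |gg p - II p| ≤ 1 / (p + 2*n) := by
    intro n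
    have hpn : 0 < p + 2*n := by positivity
    rw [key n]
    have h1 := gg_nonneg hpn
    have h2 := gg_le hpn
    have h3 := II_nonneg hpn
    have h4 := II_le hpn
    rw [abs_sub_le_iff]
    constructor <;> linarith
  have hlim : Tendsto (fun n : ℕ => 1 / (p + 2*(n:ℝ))) atTop (nhds 0) := by
    have h : Tendsto (fun n : ℕ => p + 2*(n:ℝ)) atTop atTop :=
      tendsto_atTop_add_const_left _ p
        ((tendsto_natCast_atTop_atTop (R := ℝ)).const_mul_atTop (by norm_num))
    simpa [one_div, Pi.inv_def] using h.inv_tendsto_atTop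
  have : |gg p - II p| ≤ 0 := ge_of_tendsto hlim (Filter.Eventually.of_forall hb)
  have := abs_nonneg (gg p - II p)
  have h0 : |gg p - II p| = 0 := le_antisymm ‹_› ‹_›
  rw [abs_eq_zero] at h0
  linarith

lemma J_integrable {p : ℝ} (hp : 0 < p) :
    IntervalIntegrable (fun t : ℝ => t ^ p / (1 + t)^2) volume 0 1 := by
  have h1 : IntervalIntegrable (fun t : ℝ => t ^ p) volume 0 1 :=
    intervalIntegral.intervalIntegrable_rpow' (by linarith)
  have h2 : ContinuousOn (fun t : ℝ => ((1 + t)^2)⁻¹) (uIcc (0:ℝ) 1) := by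
    apply ContinuousOn.inv₀ (by fun_prop)
    intro x hx
    rw [uIcc_of_le (by norm_num)] at hx
    have := hx.1; positivity
  simpa [div_eq_mul_inv] using h1.mul_continuousOn h2

lemma J_eq {p : ℝ} (hp : 0 < p) :
    (∫ t in (0:ℝ)..1, t ^ p / (1 + t)^2) = p * II p - 1/2 := by
  set f' : ℝ → ℝ := fun t => p * t ^ (p-1) / (1+t) - t ^ p / (1+t)^2 with hf'
  have hcont : ContinuousOn (fun t : ℝ => t ^ p / (1+t)) (Icc (0:ℝ) 1) := by
    apply ContinuousOn.div
    · intro x hx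
      exact (Real.continuousAt_rpow_const x p (Or.inr hp.le)).continuousWithinAt
    · fun_prop
    · intro x hx; have := hx.1; positivity
  have hderiv : ∀ x ∈ Ioo (0:ℝ) 1, HasDerivAt (fun t : ℝ => t ^ p / (1+t)) (f' x) x := by
    intro x hx
    have hx0 : (0:ℝ) < x := hx.1
    have hx1 : (0:ℝ) < 1 + x := by linarith
    have hu : HasDerivAt (fun t : ℝ => t ^ p) (p * x ^ (p-1)) x := by
      simpa [mul_comm] using Real.hasDerivAt_rpow_const (Or.inl hx0.ne')
    have hv : HasDerivAt (fun t : ℝ => 1 + t) 1 x := by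
      simpa using (hasDerivAt_id x).const_add 1
    have := hu.div hv hx1.ne'
    convert this using 1
    · rfl
    · rfl
    · rfl
    rw [hf']
    field_simp
  have hint : IntervalIntegrable f' volume 0 1 := by
    apply IntervalIntegrable.sub _ (J_integrable hp)
    have := (II_integrable hp).const_mul p
    simpa [mul_div_assoc] using this
  have ftc := intervalIntegral.integral_eq_sub_of_hasDerivAt_of_le (by norm_num)
    hcont hderiv hint
  rw [Real.one_rpow, Real.zero_rpow hp.ne'] at ftc
  norm_num at ftc
  have hsplit : (∫ t in (0:ℝ)..1, f' t)
      = p * II p - ∫ t in (0:ℝ)..1, t ^ p / (1+t)^2 := by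
    rw [hf']
    rw [intervalIntegral.integral_sub (by
      have := (II_integrable hp).const_mul p
      simpa [mul_div_assoc] using this) (J_integrable hp)]
    congr 1
    unfold II
    rw [← intervalIntegral.integral_const_mul]
    congr 1; ext t; ring
  rw [hsplit] at ftc
  linarith

end aux

theorem deriv_log_r_eq (p : ℝ) (hp : 0 < p) :
    deriv (fun q => Real.log (r q)) p = (∫ t in (0:ℝ)..1, t ^ p / (1 + t) ^ 2) / p ∧
    (1 / 2) * (psi ((p + 1) / 2) - psi (p / 2)) - 1 / (2 * p) =
      (1 / p) * ∫ t in (0:ℝ)..1, t ^ p / (1 + t) ^ 2 := by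
  have hJ := J_eq hp
  have hgI := gg_eq_II hp
  have part2 : (1 / 2) * (psi ((p + 1) / 2) - psi (p / 2)) - 1 / (2 * p) =
      (1 / p) * ∫ t in (0:ℝ)..1, t ^ p / (1 + t) ^ 2 := by
    rw [hJ]
    have : (1 / 2) * (psi ((p + 1) / 2) - psi (p / 2)) = gg p := by unfold gg; ring
    rw [this, hgI]
    field_simp
  refine ⟨?_, part2⟩
  -- part 1
  have hA : HasDerivAt (fun q : ℝ => Real.log (Real.Gamma ((q+1)/2)))
      (psi ((p+1)/2) * (1/2)) p := by
    have := (hasDerivAt_logGamma (by linarith : (0:ℝ) < (p+1)/2)).comp p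
      (((hasDerivAt_id p).add_const 1).div_const 2)
    simpa [Function.comp_def] using this
  have hB : HasDerivAt (fun q : ℝ => Real.log (Real.Gamma (q/2)))
      (psi (p/2) * (1/2)) p := by
    have := (hasDerivAt_logGamma (by linarith : (0:ℝ) < p/2)).comp p
      ((hasDerivAt_id p).div_const 2)
    simpa [Function.comp_def] using this
  have hC : HasDerivAt (fun q : ℝ => Real.log (q/2) / 2) (1/(2*p)) p := by
    have h1 : HasDerivAt (fun q : ℝ => q/2) (1/2) p := by
      simpa using (hasDerivAt_id p).div_const 2
    have h2 := (Real.hasDerivAt_log (by positivity : (p/2:ℝ) ≠ 0)).comp p h1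
    have := h2.div_const 2
    convert this using 1
    · rfl
    · rfl
    · rfl
    field_simp
  have hD : HasDerivAt (fun q : ℝ => Real.log (Real.Gamma ((q+1)/2))
      - Real.log (Real.Gamma (q/2)) - Real.log (q/2) / 2)
      (psi ((p+1)/2) * (1/2) - psi (p/2) * (1/2) - 1/(2*p)) p := (hA.sub hB).sub hC
  have hev : (fun q : ℝ => Real.log (r q)) =ᶠ[nhds p]
      (fun q : ℝ => Real.log (Real.Gamma ((q+1)/2))
        - Real.log (Real.Gamma (q/2)) - Real.log (q/2) / 2) := by
    filter_upwards [eventually_gt_nhds hp] with q hq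
    unfold r
    have hg1 : (0:ℝ) < Real.Gamma ((q+1)/2) := Real.Gamma_pos_of_pos (by linarith)
    have hg2 : (0:ℝ) < Real.Gamma (q/2) := Real.Gamma_pos_of_pos (by linarith)
    have hs : (0:ℝ) < Real.sqrt (q/2) := Real.sqrt_pos.mpr (by linarith)
    rw [Real.log_div hg1.ne' (by positivity), Real.log_mul hs.ne' hg2.ne',
      Real.log_sqrt (by linarith)]
    ring
  have hfinal : HasDerivAt (fun q : ℝ => Real.log (r q))
      (psi ((p+1)/2) * (1/2) - psi (p/2) * (1/2) - 1/(2*p)) p :=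
    hD.congr_of_eventuallyEq hev
  rw [hfinal.deriv]
  have : psi ((p+1)/2) * (1/2) - psi (p/2) * (1/2) - 1/(2*p)
      = (1 / 2) * (psi ((p + 1) / 2) - psi (p / 2)) - 1 / (2 * p) := by ring
  rw [this, part2]
  field_simp
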